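/- Let 𝒳, ω, 𝒮 be classes of objects in an abelian category 𝒞 satisfying: (1) ω is closed under extensions and isomorphisms; (2) ω ∩ 𝒮 is closed under direct summands and is a relative generator in ω; (3) ω ∩ 𝒮 ⊆ 𝒳 ∩ 𝒮; (4) 𝒳 ∩ 𝒮 is closed under kernels of epimorphisms between its objects; (5) Ext^i(X, W) = 0 for all i ≥ 1, X ∈ 𝒳 ∩ 𝒮, W ∈ ω ∩ 𝒮. Then ω ∩ 𝒮 = 𝒳 ∩ ω^∧ ∩ 𝒮. In particular, this equality holds whenever (𝒳, ω) is a left Frobenius pair cut along 𝒮. -/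

import Mathlib

namespace CutPaper

open CategoryTheory CategoryTheory.Limits CategoryTheory.Abelian ZeroObject

universe w v u

variable {C : Type u} [Category.{v} C] [Abelian C]

/-- There exists a short exact sequence `0 ⟶ X ⟶ Y ⟶ Z ⟶ 0` in `C`. -/
def SES (X Y Z : C) : Prop :=
  ∃ (f : X ⟶ Y) (g : Y ⟶ Z) (zero : f ≫ g = 0),
    (ShortComplex.mk f g zero).ShortExact

/-- A class of objects is closed under isomorphisms. -/
def ClosedUnderIso (A : Set C) : Prop :=
  ∀ ⦃X Y : C⦄, (X ≅ Y) → X ∈ A → Y ∈ A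

/-- A class of objects is closed under direct summands (i.e. retracts). -/
def ClosedUnderDirectSummands (A : Set C) : Prop :=
  ∀ ⦃X Y : C⦄ (i : X ⟶ Y) (r : Y ⟶ X), i ≫ r = 𝟙 X → Y ∈ A → X ∈ A

/-- A class of objects is closed under extensions. -/
def ClosedUnderExtensions (A : Set C) : Prop :=
  ∀ ⦃X Y Z : C⦄, SES X Y Z → X ∈ A → Z ∈ A → Y ∈ A

/-- A class of objects is closed under kernels of epimorphisms between its objects. -/
def ClosedUnderEpiKernels (A : Set C) : Prop :=
  ∀ ⦃X Y Z : C⦄, SES X Y Z → Y ∈ A → Z ∈ A → X ∈ A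

/-- A class of objects is closed under cokernels of monomorphisms between its objects. -/
def ClosedUnderMonoCokernels (A : Set C) : Prop :=
  ∀ ⦃X Y Z : C⦄, SES X Y Z → X ∈ A → Y ∈ A → Z ∈ A

/-- A class is left thick if it is closed under extensions, epi-kernels and direct summands. -/
def LeftThick (A : Set C) : Prop :=
  ClosedUnderExtensions A ∧ ClosedUnderEpiKernels A ∧ ClosedUnderDirectSummands A

/-- A class is right thick if closed under extensions, mono-cokernels and direct summands. -/
def RightThick (A : Set C) : Prop :=
  ClosedUnderExtensions A ∧ ClosedUnderMonoCokernels A ∧ ClosedUnderDirectSummands A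

/-- A class is thick if it is both left and right thick. -/
def IsThickClass (A : Set C) : Prop := LeftThick A ∧ RightThick A

/-- The smallest thick class containing `F`. -/
def ThickClosure (F : Set C) : Set C := ⋂₀ {T : Set C | IsThickClass T ∧ F ⊆ T}

/-- A class is closed under finite (binary) coproducts. -/
def ClosedUnderBinaryCoproducts (A : Set C) : Prop :=
  ∀ ⦃X Y : C⦄, X ∈ A → Y ∈ A → (X ⊞ Y) ∈ A

/-- `ω` is a relative cogenerator in `A`: `ω ⊆ A` and every `X ∈ A` fits in a short
exact sequence `0 → X → W → X' → 0` with `W ∈ ω`, `X' ∈ A`. -/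
def IsRelativeCogenerator (ω A : Set C) : Prop :=
  ω ⊆ A ∧ ∀ X ∈ A, ∃ W X', W ∈ ω ∧ X' ∈ A ∧ SES X W X'

/-- `ν` is a relative generator in `ω`: `ν ⊆ ω` and every `W ∈ ω` fits in a short
exact sequence `0 → W' → V → W → 0` with `V ∈ ν`, `W' ∈ ω`. -/
def IsRelativeGenerator (ν ω : Set C) : Prop :=
  ν ⊆ ω ∧ ∀ W ∈ ω, ∃ V W', V ∈ ν ∧ W' ∈ ω ∧ SES W' V W

/-- The objects of `B`-resolution dimension at most `n` (the class `B^∧_n`). -/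
def ResDimLE (B : Set C) : ℕ → Set C
  | 0 => {X | ∃ B₀ ∈ B, Nonempty (X ≅ B₀)}
  | (n + 1) => ResDimLE B n ∪ {X | ∃ K B₀, K ∈ ResDimLE B n ∧ B₀ ∈ B ∧ SES K B₀ X}

/-- The class `B^∧` of objects of finite `B`-resolution dimension. -/
def ResFin (B : Set C) : Set C := {X | ∃ n, X ∈ ResDimLE B n}

/-- The `B`-resolution dimension of an object, valued in `ℕ∞`. -/
noncomputable def resDim (B : Set C) (X : C) : ℕ∞ :=
  sInf ((fun n : ℕ => (n : ℕ∞)) '' {n | X ∈ ResDimLE B n})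

/-- The objects of `B`-coresolution dimension at most `n` (the class `B^∨_n`). -/
def CoresDimLE (B : Set C) : ℕ → Set C
  | 0 => {X | ∃ B₀ ∈ B, Nonempty (X ≅ B₀)}
  | (n + 1) => CoresDimLE B n ∪ {X | ∃ B₀ K, B₀ ∈ B ∧ K ∈ CoresDimLE B n ∧ SES X B₀ K}

/-- The `B`-coresolution dimension of an object, valued in `ℕ∞`. -/
noncomputable def coresDim (B : Set C) (X : C) : ℕ∞ :=
  sInf ((fun n : ℕ => (n : ℕ∞)) '' {n | X ∈ CoresDimLE B n})

/-- The class of `(𝒳, 𝒴)`-Gorenstein projective objects: 0-th cycles of exact,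
`Hom(-, 𝒴)`-acyclic complexes with components in `𝒳`. -/
def GorensteinProj (𝒳 𝒴 : Set C) : Set C :=
  {M | ∃ K : ChainComplex C ℤ,
    (∀ m : ℤ, K.X m ∈ 𝒳) ∧
    (∀ m : ℤ, K.ExactAt m) ∧
    (∀ Y₀ ∈ 𝒴, ∀ m : ℤ, ∀ f : K.X m ⟶ Y₀, K.d (m + 1) m ≫ f = 0 →
      ∃ g : K.X (m - 1) ⟶ Y₀, K.d m (m - 1) ≫ g = f) ∧
    Nonempty (M ≅ K.cycles 0)}

section HasExt

variable [HasExt.{w} C]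

/-- `Ext¹(A, B) = 0`. -/
def ext1Zero (A B : C) : Prop := Subsingleton (Abelian.Ext.{w} A B 1)

/-- `Extⁱ(A, B) = 0` for all `i ≥ 1`. -/
def extVanish (A B : C) : Prop := ∀ i : ℕ, 1 ≤ i → Subsingleton (Abelian.Ext.{w} A B i)

/-- `Extⁱ(X, Y) = 0` for all `i ≥ 1`, `X ∈ 𝒜`, `Y ∈ ℬ`. -/
def ExtPairVanish (𝒜 ℬ : Set C) : Prop := ∀ X ∈ 𝒜, ∀ Y ∈ ℬ, extVanish.{w} X Y

/-- The right `Ext¹`-orthogonal complement `𝒜^{⊥1}`. -/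
def rightPerp1 (𝒜 : Set C) : Set C := {N | ∀ X ∈ 𝒜, ext1Zero.{w} X N}

/-- The total right orthogonal complement `𝒜^{⊥}`. -/
def rightPerp (𝒜 : Set C) : Set C := {N | ∀ X ∈ 𝒜, extVanish.{w} X N}

/-- The left `Ext¹`-orthogonal complement `^{⊥1}ℬ`. -/
def leftPerp1 (ℬ : Set C) : Set C := {M | ∀ Y ∈ ℬ, ext1Zero.{w} M Y}

/-- `(𝒜, ℬ)` is a left cotorsion pair cut along `𝒮`. -/
def LeftCutCotorsion (𝒜 ℬ 𝒮 : Set C) : Prop :=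
  ClosedUnderDirectSummands 𝒜 ∧ 𝒜 ∩ 𝒮 = leftPerp1.{w} ℬ ∩ 𝒮

/-- `(𝒜, ℬ)` is a complete left cotorsion pair cut along `𝒮`. -/
def CompleteLeftCutCotorsion (𝒜 ℬ 𝒮 : Set C) : Prop :=
  LeftCutCotorsion.{w} 𝒜 ℬ 𝒮 ∧ ∀ S ∈ 𝒮, ∃ B₀ A₀, B₀ ∈ ℬ ∧ A₀ ∈ 𝒜 ∧ SES B₀ A₀ S

/-- `(𝒜, ℬ)` is a right cotorsion pair cut along `𝒮`. -/
def RightCutCotorsion (𝒜 ℬ 𝒮 : Set C) : Prop :=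
  ClosedUnderDirectSummands ℬ ∧ ℬ ∩ 𝒮 = rightPerp1.{w} 𝒜 ∩ 𝒮

/-- `(𝒜, ℬ)` is a complete right cotorsion pair cut along `𝒮`. -/
def CompleteRightCutCotorsion (𝒜 ℬ 𝒮 : Set C) : Prop :=
  RightCutCotorsion.{w} 𝒜 ℬ 𝒮 ∧ ∀ S ∈ 𝒮, ∃ B₀ A₀, B₀ ∈ ℬ ∧ A₀ ∈ 𝒜 ∧ SES S B₀ A₀

/-- `(𝒜, ℬ)` is a complete cotorsion pair cut along `𝒮`. -/
def CompleteCutCotorsion (𝒜 ℬ 𝒮 : Set C) : Prop :=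
  CompleteLeftCutCotorsion.{w} 𝒜 ℬ 𝒮 ∧ CompleteRightCutCotorsion.{w} 𝒜 ℬ 𝒮

/-- `(𝒜, ℬ)` is a complete left cotorsion pair in `C`. -/
def CompleteLeftCotorsionPair (𝒜 ℬ : Set C) : Prop :=
  𝒜 = leftPerp1.{w} ℬ ∧ ∀ X : C, ∃ B₀ A₀, B₀ ∈ ℬ ∧ A₀ ∈ 𝒜 ∧ SES B₀ A₀ X

/-- `(𝒜, ℬ)` is a complete cotorsion pair in `C`. -/
def CompleteCotorsionPair (𝒜 ℬ : Set C) : Prop :=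
  CompleteLeftCotorsionPair.{w} 𝒜 ℬ ∧ ℬ = rightPerp1.{w} 𝒜 ∧
    ∀ X : C, ∃ B₀ A₀, B₀ ∈ ℬ ∧ A₀ ∈ 𝒜 ∧ SES X B₀ A₀

/-- `(𝒳, ω)` is a left Frobenius pair in `C`. -/
def LeftFrobenius (𝒳 ω : Set C) : Prop :=
  LeftThick 𝒳 ∧ ClosedUnderDirectSummands ω ∧
    ExtPairVanish.{w} 𝒳 ω ∧ IsRelativeCogenerator ω 𝒳

/-- `(𝒳, ω)` is a left Frobenius pair cut along `𝒮`. -/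
def LeftFrobeniusCutAlong (𝒳 ω 𝒮 : Set C) : Prop :=
  LeftThick 𝒳 ∧
  LeftFrobenius.{w} (𝒳 ∩ 𝒮) (ω ∩ 𝒮) ∧
  (ExtPairVanish.{w} (ω ∩ 𝒮) ω ∧ IsRelativeGenerator (ω ∩ 𝒮) ω) ∧
  (ClosedUnderExtensions ω ∧ ClosedUnderDirectSummands ω)

/-- `(𝒜, ℬ)` is a left weak AB context in `C`. -/
def LeftWeakABContext (𝒜 ℬ : Set C) : Prop :=
  LeftFrobenius.{w} 𝒜 (𝒜 ∩ ℬ) ∧ RightThick ℬ ∧ ℬ ⊆ ResFin 𝒜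

/-- `(𝒜, ℬ)` is a left weak AB context cut along `𝒮`. -/
def LeftWeakABContextCutAlong (𝒜 ℬ 𝒮 : Set C) : Prop :=
  LeftFrobeniusCutAlong.{w} 𝒜 (𝒜 ∩ ℬ) 𝒮 ∧ RightThick (ℬ ∩ 𝒮) ∧
    ℬ ∩ 𝒮 ⊆ ResFin (𝒜 ∩ 𝒮)

/-- `(𝒳, 𝒴)` is a GP-admissible pair. -/
def GPAdmissible (𝒳 𝒴 : Set C) : Prop :=
  ExtPairVanish.{w} 𝒳 𝒴 ∧
  (∀ M : C, ∃ X₀, X₀ ∈ 𝒳 ∧ ∃ p : X₀ ⟶ M, Epi p) ∧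
  ClosedUnderBinaryCoproducts 𝒳 ∧ ClosedUnderBinaryCoproducts 𝒴 ∧
  ClosedUnderExtensions 𝒳 ∧
  IsRelativeCogenerator (𝒳 ∩ 𝒴) 𝒳

/-- The class `ℰ_l(𝒜, ℬ)` of objects admitting a suitable left approximation. -/
def EClassLeft (𝒜 ℬ : Set C) : Set C :=
  {X | ∃ B₀ A₀, B₀ ∈ ℬ ∧ A₀ ∈ 𝒜 ∧ SES B₀ A₀ X}

/-- The maximal left cotorsion cut `𝕊_l(𝒜, ℬ)`. -/
def MaxLeftCut (𝒜 ℬ : Set C) : Set C :=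
  ⋃₀ {𝒮 | CompleteLeftCutCotorsion.{w} 𝒜 ℬ 𝒮}

/-- `pd(M) ≤ n`, via vanishing of `Ext` in degrees `> n`. -/
def pdLE (M : C) (n : ℕ) : Prop :=
  ∀ i : ℕ, n < i → ∀ N : C, Subsingleton (Abelian.Ext.{w} M N i)

/-- The projective dimension of an object, valued in `ℕ∞`. -/
noncomputable def pd (M : C) : ℕ∞ :=
  sInf ((fun n : ℕ => (n : ℕ∞)) '' {n | pdLE.{w} M n})

/-- The projective dimension of a class of objects. -/
noncomputable def pdClass (𝒜 : Set C) : ℕ∞ := ⨆ M ∈ 𝒜, pd.{w} M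

/-- The `𝔓_𝒮`-condition of the second correspondence theorem. -/
def PPair (𝒮 ℱ 𝒢 : Set C) : Prop :=
  CompleteCutCotorsion.{w} ℱ 𝒢 (ThickClosure ℱ) ∧
  ExtPairVanish.{w} ℱ 𝒢 ∧
  IsRelativeGenerator (ℱ ∩ 𝒢 ∩ 𝒮) (ℱ ∩ 𝒢) ∧
  IsRelativeCogenerator (ℱ ∩ 𝒢 ∩ 𝒮) (ℱ ∩ 𝒢)

end HasExt

/-- The class of projective objects of `C`. -/
def ProjClass (C : Type u) [Category.{v} C] : Set C := {P : C | Projective P}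

section HasExt
variable (C) [HasExt.{w} C]

/-- The finitistic dimension of `C`. -/
noncomputable def Findim : ℕ∞ := pdClass.{w} (ResFin (ProjClass C))

end HasExt



section Lemma41Proof

variable {C : Type u} [Category.{v} C] [Abelian C]

/-- A class closed under direct summands is closed under isomorphisms. -/
lemma closedUnderIso_of_closedUnderDirectSummands {A : Set C}
    (h : ClosedUnderDirectSummands A) : ClosedUnderIso A := by
  intro X Y e hX
  exact h e.inv e.hom e.inv_hom_id hX

/-- Construct a `SES` from an epimorphism together with the fact that `f` is its kernel. -/
lemma ses_of_isKernel {X Y Z : C} {f : X ⟶ Y} {g : Y ⟶ Z} (zero : f ≫ g = 0) [Epi g]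
    (h : IsLimit (KernelFork.ofι f zero)) : SES X Y Z := by
  haveI : Mono f := mono_of_isLimit_fork h
  exact ⟨f, g, zero, { exact := (ShortComplex.mk f g zero).exact_of_f_is_kernel h }⟩

/-- Pulling back two short exact sequences with the same cokernel. -/
lemma ses_pullback_left {A B Z A' B' : C} (h1 : SES A B Z) (h2 : SES A' B' Z) :
    ∃ Q : C, SES A' Q B ∧ SES A Q B' := by
  obtain ⟨f₁, g₁, zero₁, hse₁⟩ := h1
  obtain ⟨f₂, g₂, zero₂, hse₂⟩ := h2
  haveI := hse₁.epi_g; haveI := hse₂.epi_g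
  haveI := hse₁.mono_f; haveI := hse₂.mono_f
  refine ⟨pullback g₁ g₂, ?_, ?_⟩
  · -- `0 → A' → pullback g₁ g₂ → B → 0` via `fst`
    have hcomm : (0 : A' ⟶ B) ≫ g₁ = f₂ ≫ g₂ := by rw [zero_comp, zero₂]
    set u : A' ⟶ pullback g₁ g₂ := pullback.lift 0 f₂ hcomm with hu
    have zero : u ≫ pullback.fst g₁ g₂ = 0 := by rw [hu]; exact pullback.lift_fst _ _ _
    haveI : Mono (u ≫ pullback.snd g₁ g₂) := by
      rw [hu, pullback.lift_snd]; infer_instance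
    haveI : Mono u := mono_of_mono u (pullback.snd g₁ g₂)
    refine ses_of_isKernel zero (KernelFork.IsLimit.ofι' u zero (fun {T} k hk => ?_))
    have hkg : (k ≫ pullback.snd g₁ g₂) ≫ g₂ = 0 := by
      rw [Category.assoc, ← pullback.condition, ← Category.assoc, hk, zero_comp]
    obtain ⟨w, hw⟩ := KernelFork.IsLimit.lift' hse₂.fIsKernel (k ≫ pullback.snd g₁ g₂) hkg
    have hw' : w ≫ f₂ = k ≫ pullback.snd g₁ g₂ := hw
    refine ⟨w, ?_⟩
    apply pullback.hom_ext
    · rw [Category.assoc, hu, pullback.lift_fst, comp_zero, hk]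
    · rw [Category.assoc, hu, pullback.lift_snd, hw']
  · -- `0 → A → pullback g₁ g₂ → B' → 0` via `snd`
    have hcomm : f₁ ≫ g₁ = (0 : A ⟶ B') ≫ g₂ := by rw [zero_comp, zero₁]
    set u : A ⟶ pullback g₁ g₂ := pullback.lift f₁ 0 hcomm with hu
    have zero : u ≫ pullback.snd g₁ g₂ = 0 := by rw [hu]; exact pullback.lift_snd _ _ _
    haveI : Mono (u ≫ pullback.fst g₁ g₂) := by
      rw [hu, pullback.lift_fst]; infer_instance
    haveI : Mono u := mono_of_mono u (pullback.fst g₁ g₂)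
    refine ses_of_isKernel zero (KernelFork.IsLimit.ofι' u zero (fun {T} k hk => ?_))
    have hkg : (k ≫ pullback.fst g₁ g₂) ≫ g₁ = 0 := by
      rw [Category.assoc, pullback.condition, ← Category.assoc, hk, zero_comp]
    obtain ⟨w, hw⟩ := KernelFork.IsLimit.lift' hse₁.fIsKernel (k ≫ pullback.fst g₁ g₂) hkg
    have hw' : w ≫ f₁ = k ≫ pullback.fst g₁ g₂ := hw
    refine ⟨w, ?_⟩
    apply pullback.hom_ext
    · rw [Category.assoc, hu, pullback.lift_fst, hw']
    · rw [Category.assoc, hu, pullback.lift_snd, comp_zero, hk]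

/-- Given `0 → K → W → X → 0` and `0 → W' → V → W → 0`, there is `P` with
`0 → W' → P → K → 0` and `0 → P → V → X → 0`. -/
lemma ses_comp_ker {K W X W' V : C} (h1 : SES K W X) (h2 : SES W' V W) :
    ∃ P : C, SES W' P K ∧ SES P V X := by
  obtain ⟨f₁, g₁, zero₁, hse₁⟩ := h1
  obtain ⟨f₂, g₂, zero₂, hse₂⟩ := h2
  haveI := hse₁.epi_g; haveI := hse₂.epi_g
  haveI := hse₁.mono_f; haveI := hse₂.mono_f
  refine ⟨pullback g₂ f₁, ?_, ?_⟩
  · -- `0 → W' → pullback g₂ f₁ → K → 0` via `snd`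
    have hcomm : f₂ ≫ g₂ = (0 : W' ⟶ K) ≫ f₁ := by rw [zero_comp, zero₂]
    set u : W' ⟶ pullback g₂ f₁ := pullback.lift f₂ 0 hcomm with hu
    have zero : u ≫ pullback.snd g₂ f₁ = 0 := by rw [hu]; exact pullback.lift_snd _ _ _
    haveI : Mono (u ≫ pullback.fst g₂ f₁) := by
      rw [hu, pullback.lift_fst]; infer_instance
    haveI : Mono u := mono_of_mono u (pullback.fst g₂ f₁)
    refine ses_of_isKernel zero (KernelFork.IsLimit.ofι' u zero (fun {T} k hk => ?_))
    have hkg : (k ≫ pullback.fst g₂ f₁) ≫ g₂ = 0 := by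
      rw [Category.assoc, pullback.condition, ← Category.assoc, hk, zero_comp]
    obtain ⟨w, hw⟩ := KernelFork.IsLimit.lift' hse₂.fIsKernel (k ≫ pullback.fst g₂ f₁) hkg
    have hw' : w ≫ f₂ = k ≫ pullback.fst g₂ f₁ := hw
    refine ⟨w, ?_⟩
    apply pullback.hom_ext
    · rw [Category.assoc, hu, pullback.lift_fst, hw']
    · rw [Category.assoc, hu, pullback.lift_snd, comp_zero, hk]
  · -- `0 → pullback g₂ f₁ → V → X → 0` via `fst` and `g₂ ≫ g₁`
    have zero : pullback.fst g₂ f₁ ≫ g₂ ≫ g₁ = 0 := by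
      rw [← Category.assoc, pullback.condition, Category.assoc, zero₁, comp_zero]
    refine ses_of_isKernel zero (KernelFork.IsLimit.ofι' _ zero (fun {T} k hk => ?_))
    have hkg : (k ≫ g₂) ≫ g₁ = 0 := by rw [Category.assoc, hk]
    obtain ⟨w, hw⟩ := KernelFork.IsLimit.lift' hse₁.fIsKernel (k ≫ g₂) hkg
    have hw' : w ≫ f₁ = k ≫ g₂ := hw
    exact ⟨pullback.lift k w hw'.symm, pullback.lift_fst _ _ _⟩

/-- If `ω` is closed under extensions and isomorphisms, then the class of objects
of `ω`-resolution dimension `≤ m` is closed under "extensions by `ω`". -/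
lemma resDimLE_of_ses {ω : Set C} (hext : ClosedUnderExtensions ω)
    (hiso : ClosedUnderIso ω) :
    ∀ (m : ℕ) {W' P K : C}, W' ∈ ω → SES W' P K → K ∈ ResDimLE ω m →
      P ∈ ResDimLE ω m := by
  intro m
  induction m with
  | zero =>
    intro W' P K hW' hS hK
    obtain ⟨B₀, hB₀, ⟨e⟩⟩ := hK
    exact ⟨P, hext hS hW' (hiso e.symm hB₀), ⟨Iso.refl P⟩⟩
  | succ m ih =>
    intro W' P K hW' hS hK
    rcases hK with hK | ⟨K', B, hK', hB, hSKB⟩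
    · exact Or.inl (ih hW' hS hK)
    · obtain ⟨Q, hQ1, hQ2⟩ := ses_pullback_left hSKB hS
      exact Or.inr ⟨K', Q, hK', hext hQ1 hW' hB, hQ2⟩

section HasExtProof

variable [HasExt.{w} C]

/-- If `Ext¹(X₃, X₁)` vanishes, a short exact sequence ending at `X₃` admits a section. -/
lemma exists_section_of_ext1_subsingleton {S : ShortComplex C} (hS : S.ShortExact)
    (h : Subsingleton (Abelian.Ext.{w} S.X₃ S.X₁ 1)) :
    ∃ s : S.X₃ ⟶ S.X₂, s ≫ S.g = 𝟙 S.X₃ := by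
  obtain ⟨x₂, hx₂⟩ := Ext.covariant_sequence_exact₃ S.X₃ hS (Ext.mk₀ (𝟙 S.X₃))
    (zero_add 1) (Subsingleton.elim _ _)
  letI := HasDerivedCategory.standard C
  obtain ⟨φ, hφ⟩ := (ShiftedHom.homEquiv (M := ℤ) ((0 : ℕ) : ℤ) (by simp)).surjective x₂.hom
  rw [ShiftedHom.homEquiv_apply] at hφ
  have hhom : (x₂.comp (Ext.mk₀ S.g) (add_zero 0)).hom = (Ext.mk₀ (𝟙 S.X₃)).hom := by
    rw [hx₂]
  rw [Ext.comp_hom, Ext.mk₀_hom, Ext.mk₀_hom, ← hφ, ShiftedHom.mk₀_comp_mk₀] at hhom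
  have hcancel : φ ≫ (DerivedCategory.singleFunctor C 0).map S.g =
      (DerivedCategory.singleFunctor C 0).map (𝟙 S.X₃) := by
    simp only [ShiftedHom.mk₀] at hhom
    exact (cancel_mono _).1 hhom
  let e : DerivedCategory.singleFunctor C 0 ⋙ DerivedCategory.homologyFunctor C 0 ≅ 𝟭 C :=
    Functor.isoWhiskerRight ((SingleFunctors.evaluation _ _ 0).mapIso
        (DerivedCategory.singleFunctorsPostcompQIso C)) (DerivedCategory.homologyFunctor C 0) ≪≫
      Functor.associator _ _ _ ≪≫
      Functor.isoWhiskerLeft (HomologicalComplex.single C (ComplexShape.up ℤ) 0)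
        (DerivedCategory.homologyFunctorFactors C 0) ≪≫
      HomologicalComplex.homologyFunctorSingleIso C (ComplexShape.up ℤ) 0
  refine ⟨e.inv.app S.X₃ ≫ (DerivedCategory.homologyFunctor C 0).map φ ≫ e.hom.app S.X₂, ?_⟩
  have hnat : (DerivedCategory.singleFunctor C 0 ⋙ DerivedCategory.homologyFunctor C 0).map S.g ≫
      e.hom.app S.X₃ = e.hom.app S.X₂ ≫ (𝟭 C).map S.g :=
    e.hom.naturality S.g
  rw [Functor.id_map] at hnat
  rw [Category.assoc, Category.assoc, ← hnat]
  have hid : (DerivedCategory.homologyFunctor C 0).map φ ≫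
      (DerivedCategory.singleFunctor C 0 ⋙ DerivedCategory.homologyFunctor C 0).map S.g =
      𝟙 ((DerivedCategory.homologyFunctor C 0).obj
        ((DerivedCategory.singleFunctor C 0).obj S.X₃)) := by
    rw [Functor.comp_map, ← Functor.map_comp, hcancel, CategoryTheory.Functor.map_id,
      CategoryTheory.Functor.map_id]
  rw [← Category.assoc ((DerivedCategory.homologyFunctor C 0).map φ), hid, Category.id_comp,
    Iso.inv_hom_id_app]
  rfl

/-- The key induction: objects of `𝒳 ∩ 𝒮` of finite `ω`-resolution dimension lie
in `ω ∩ 𝒮`. -/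
lemma mem_omega_inter_of_resDimLE {𝒳 ω 𝒮 : Set C}
    (hext : ClosedUnderExtensions ω) (hiso : ClosedUnderIso ω)
    (hsum : ClosedUnderDirectSummands (ω ∩ 𝒮)) (hgen : IsRelativeGenerator (ω ∩ 𝒮) ω)
    (hsub : ω ∩ 𝒮 ⊆ 𝒳 ∩ 𝒮) (hker : ClosedUnderEpiKernels (𝒳 ∩ 𝒮))
    (hvan : ExtPairVanish.{w} (𝒳 ∩ 𝒮) (ω ∩ 𝒮)) :
    ∀ (n : ℕ) (X : C), X ∈ 𝒳 ∩ 𝒮 → X ∈ ResDimLE ω n → X ∈ ω ∩ 𝒮 := by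
  intro n
  induction n with
  | zero =>
    intro X hX hres
    obtain ⟨B₀, hB₀, ⟨e⟩⟩ := hres
    exact ⟨hiso e.symm hB₀, hX.2⟩
  | succ n ih =>
    intro X hX hres
    rcases hres with hres | ⟨K, W₀, hK, hW₀, hS1⟩
    · exact ih X hX hres
    · obtain ⟨V, W', hV, hW', hS2⟩ := hgen.2 W₀ hW₀
      obtain ⟨P, hPK, hPVX⟩ := ses_comp_ker hS1 hS2
      have hPres : P ∈ ResDimLE ω n := resDimLE_of_ses hext hiso n hW' hPK hK
      have hPXS : P ∈ 𝒳 ∩ 𝒮 := hker hPVX (hsub hV) hX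
      have hPω : P ∈ ω ∩ 𝒮 := ih P hPXS hPres
      obtain ⟨f, g, zero, hse⟩ := hPVX
      obtain ⟨s, hs⟩ := exists_section_of_ext1_subsingleton.{w} hse
        ((hvan X hX P hPω) 1 le_rfl)
      exact hsum s g hs hV

end HasExtProof

end Lemma41Proof

/-- Lemma 4.1. Under conditions (1)–(5) on classes `𝒳, ω, 𝒮`, one has
`ω ∩ 𝒮 = 𝒳 ∩ ω^∧ ∩ 𝒮`; in particular, this holds whenever `(𝒳, ω)` is a left Frobenius
pair cut along `𝒮`. -/
theorem inter_resFin_inter_eq_of_cut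
    {C : Type u} [CategoryTheory.Category.{v} C] [CategoryTheory.Abelian C]
    [CategoryTheory.HasExt.{w} C]
    (𝒳 ω 𝒮 : Set C) :
    ((ClosedUnderExtensions ω ∧ ClosedUnderIso ω) →
      (ClosedUnderDirectSummands (ω ∩ 𝒮) ∧ IsRelativeGenerator (ω ∩ 𝒮) ω) →
      ω ∩ 𝒮 ⊆ 𝒳 ∩ 𝒮 →
      ClosedUnderEpiKernels (𝒳 ∩ 𝒮) →
      ExtPairVanish.{w} (𝒳 ∩ 𝒮) (ω ∩ 𝒮) →
      ω ∩ 𝒮 = 𝒳 ∩ ResFin ω ∩ 𝒮) ∧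
    (LeftFrobeniusCutAlong.{w} 𝒳 ω 𝒮 → ω ∩ 𝒮 = 𝒳 ∩ ResFin ω ∩ 𝒮) := by
  have main : (ClosedUnderExtensions ω ∧ ClosedUnderIso ω) →
      (ClosedUnderDirectSummands (ω ∩ 𝒮) ∧ IsRelativeGenerator (ω ∩ 𝒮) ω) →
      ω ∩ 𝒮 ⊆ 𝒳 ∩ 𝒮 →
      ClosedUnderEpiKernels (𝒳 ∩ 𝒮) →
      ExtPairVanish.{w} (𝒳 ∩ 𝒮) (ω ∩ 𝒮) →
      ω ∩ 𝒮 = 𝒳 ∩ ResFin ω ∩ 𝒮 := by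
    rintro ⟨hext, hiso⟩ ⟨hsum, hgen⟩ hsub hker hvan
    apply Set.eq_of_subset_of_subset
    · intro X hX
      exact ⟨⟨(hsub hX).1, ⟨0, X, hX.1, ⟨Iso.refl X⟩⟩⟩, hX.2⟩
    · rintro X ⟨⟨hX𝒳, n, hres⟩, hX𝒮⟩
      exact mem_omega_inter_of_resDimLE.{w} hext hiso hsum hgen hsub hker hvan n X
        ⟨hX𝒳, hX𝒮⟩ hres
  refine ⟨main, ?_⟩
  rintro ⟨hthick, hfrob, ⟨hvan', hgen⟩, hextω, hsumω⟩
  exact main ⟨hextω, closedUnderIso_of_closedUnderDirectSummands hsumω⟩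
    ⟨hfrob.2.1, hgen⟩ hfrob.2.2.2.1 hfrob.1.2.1 hfrob.2.2.1

end CutPaper
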